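/- Let C be a chain whose set of terms is contained in a UBS V ⊆ 𝒲. Then the inseparable closure in 𝒲 of the set of terms of C contains a minimal UBS. -/

import Mathlib

open Set

variable {X : Type*}

/-- A wall: a subset with nonempty complement and nonempty itself. -/
def IsWall (h : Set X) : Prop := h.Nonempty ∧ hᶜ.Nonempty

/-- Walls `h` and `k` cross. -/
def Crosses (h k : Set X) : Prop :=
  (h ∩ k).Nonempty ∧ (h ∩ kᶜ).Nonempty ∧ (hᶜ ∩ k).Nonempty ∧ (hᶜ ∩ kᶜ).Nonempty

/-- The wall `u` lies in the halfspace `H` of the wall `w`. -/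
def LiesIn (u H w : Set X) : Prop := u ≠ w ∧ (u ⊆ H ∨ uᶜ ⊆ H)

/-- The wall `w` separates the walls `u` and `v`. -/
def Separates (w u v : Set X) : Prop :=
  u ≠ v ∧ u ≠ w ∧ v ≠ w ∧
  ∃ u' v' w', (u' = u ∨ u' = uᶜ) ∧ (v' = v ∨ v' = vᶜ) ∧ (w' = w ∨ w' = wᶜ) ∧
    u' ⊆ w' ∧ v' ⊆ w'ᶜ

/-- `S` contains a facing triple. -/
def HasFacingTriple (S : Set (Set X)) : Prop :=
  ∃ a ∈ S, ∃ b ∈ S, ∃ c ∈ S, a ≠ b ∧ a ≠ c ∧ b ≠ c ∧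
    ∃ a' b' c', (a' = a ∨ a' = aᶜ) ∧ (b' = b ∨ b' = bᶜ) ∧ (c' = c ∨ c' = cᶜ) ∧
      Disjoint a' b' ∧ Disjoint a' c' ∧ Disjoint b' c'

/-- `S` is inseparable with respect to the wall collection `W`. -/
def InseparableIn (W S : Set (Set X)) : Prop :=
  ∀ u ∈ S, ∀ v ∈ S, ∀ w ∈ W, Separates w u v → w ∈ S

/-- `S` is unidirectional: for each wall `w ∈ S`, at most one of the two halfspaces of `w`
contains infinitely many walls of `S`. -/
def Unidirectional (S : Set (Set X)) : Prop :=
  ∀ w ∈ S, {u ∈ S | LiesIn u w w}.Finite ∨ {u ∈ S | LiesIn u wᶜ w}.Finite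

/-- `V` is a UBS in the wall collection `W`. -/
def IsUBS (W V : Set (Set X)) : Prop :=
  V ⊆ W ∧ V.Infinite ∧ InseparableIn W V ∧ Unidirectional V ∧ ¬ HasFacingTriple V

/-- Almost-equivalence of sets of walls. -/
def AlmostEq (S T : Set (Set X)) : Prop := (S \ T).Finite ∧ (T \ S).Finite

/-- `U` is a minimal UBS in `W`. -/
def MinUBS (W U : Set (Set X)) : Prop :=
  IsUBS W U ∧ ∀ U', IsUBS W U' → U' ⊆ U → AlmostEq U' U

/-- `A ≺ B`: every wall of `B` crosses all but finitely many walls of `A`. -/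
def Prec (A B : Set (Set X)) : Prop := ∀ b ∈ B, {a ∈ A | ¬ Crosses b a}.Finite

/-- Distinct members of `W` determine distinct partitions. -/
def Admissible (W : Set (Set X)) : Prop := ∀ h ∈ W, ∀ k ∈ W, h ≠ k → h ≠ kᶜ

/-- No infinite subset of `W` consists of pairwise-crossing walls. -/
def NoInfCross (W : Set (Set X)) : Prop := ∀ S ⊆ W, S.Pairwise Crosses → S.Finite

/-- `W` has dimension at most `D`: every pairwise-crossing subset has cardinality at most `D`. -/
def DimLE (W : Set (Set X)) (D : ℕ) : Prop :=
  ∀ S ⊆ W, S.Pairwise Crosses → S.Finite ∧ S.ncard ≤ D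

/-- `c` is a chain: an injective sequence of walls with `c n` separating `c (n-1)` and
`c (n+1)` for `n ≥ 1`. -/
def IsChainSeq (c : ℕ → Set X) : Prop :=
  Function.Injective c ∧ ∀ n, Separates (c (n + 1)) (c n) (c (n + 2))

/-- The chain `c` is inextensible in `S`: no wall of `S` has a halfspace containing every
term of `c`. -/
def InextensibleIn (S : Set (Set X)) (c : ℕ → Set X) : Prop :=
  ¬ ∃ w ∈ S, ∃ H, (H = w ∨ H = wᶜ) ∧ ∀ n, LiesIn (c n) H w

/-- The inseparable closure in `W` of a set `C` of walls. -/
def insepClosure (W C : Set (Set X)) : Set (Set X) :=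
  ⋂₀ {S | C ⊆ S ∧ S ⊆ W ∧ InseparableIn W S}

section Aux

variable {X : Type*}

theorem IsWall.ne_compl {h : Set X} (hw : IsWall h) : h ≠ hᶜ := by
  intro e
  obtain ⟨x, hx⟩ := hw.1
  exact (e ▸ hx) hx

theorem IsWall.compl {h : Set X} (hw : IsWall h) : IsWall hᶜ :=
  ⟨hw.2, by simpa [compl_compl] using hw.1⟩

theorem hsCases {h γ δ : Set X} (h1 : γ = h ∨ γ = hᶜ) (h2 : δ = h ∨ δ = hᶜ) :
    δ = γ ∨ δ = γᶜ := by
  rcases h1 with rfl | rfl <;> rcases h2 with rfl | rfl <;> simp [compl_compl]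

theorem crosses_iff {h k : Set X} :
    Crosses h k ↔ ∀ γ δ, (γ = h ∨ γ = hᶜ) → (δ = k ∨ δ = kᶜ) → (γ ∩ δ).Nonempty := by
  constructor
  · rintro ⟨h1, h2, h3, h4⟩ γ δ (rfl | rfl) (rfl | rfl) <;> assumption
  · intro H
    exact ⟨H _ _ (Or.inl rfl) (Or.inl rfl), H _ _ (Or.inl rfl) (Or.inr rfl),
      H _ _ (Or.inr rfl) (Or.inl rfl), H _ _ (Or.inr rfl) (Or.inr rfl)⟩

theorem crosses_of_hs {h k γ δ : Set X} (hγ : γ = h ∨ γ = hᶜ) (hδ : δ = k ∨ δ = kᶜ)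
    (h1 : (γ ∩ δ).Nonempty) (h2 : (γ ∩ δᶜ).Nonempty) (h3 : (γᶜ ∩ δ).Nonempty)
    (h4 : (γᶜ ∩ δᶜ).Nonempty) : Crosses h k := by
  rw [crosses_iff]
  intro γ' δ' hγ' hδ'
  rcases hsCases hγ hγ' with rfl | rfl <;> rcases hsCases hδ hδ' with rfl | rfl <;>
    assumption

theorem Crosses.symm {h k : Set X} (hc : Crosses h k) : Crosses k h := by
  obtain ⟨a, b, c, d⟩ := hc
  exact ⟨by rwa [Set.inter_comm], by rwa [Set.inter_comm],
    by rwa [Set.inter_comm], by rwa [Set.inter_comm]⟩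

theorem crosses_irrefl (h : Set X) : ¬ Crosses h h := by
  rintro ⟨-, h2, -, -⟩
  simp at h2

theorem Crosses.ne {h k : Set X} (hc : Crosses h k) : h ≠ k := by
  rintro rfl; exact crosses_irrefl _ hc

theorem wall_eq_of_hs {W : Set (Set X)} (adm : Admissible W)
    {a b γ : Set X} (ha : a ∈ W) (hb : b ∈ W)
    (h1 : γ = a ∨ γ = aᶜ) (h2 : γ = b ∨ γ = bᶜ) : a = b := by
  by_contra hne
  rcases h1 with h1 | h1 <;> rcases h2 with h2 | h2
  · exact hne (h1.symm.trans h2)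
  · exact adm a ha b hb hne (h1.symm.trans h2)
  · exact adm b hb a ha (Ne.symm hne) (h2.symm.trans h1)
  · exact hne (compl_inj_iff.mp (h1.symm.trans h2))

theorem dc_nat {α : Sort*} (R : α → α → Prop) (a0 : α) (h : ∀ a, ∃ b, R a b) :
    ∃ f : ℕ → α, f 0 = a0 ∧ ∀ n, R (f n) (f (n + 1)) := by
  classical
  refine ⟨fun n => Nat.rec a0 (fun _ a => Classical.choose (h a)) n, rfl, fun n => ?_⟩
  exact Classical.choose_spec (h _)

structure Amb (W V : Set (Set X)) : Prop where
  wall : ∀ h ∈ W, IsWall h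
  adm : Admissible W
  nic : NoInfCross W
  VW : V ⊆ W
  Vinsep : InseparableIn W V
  Vuni : Unidirectional V
  Vnft : ¬ HasFacingTriple V

structure Ladder (V : Set (Set X)) where
  t : ℕ → Set X
  G : ℕ → Set X
  side : ∀ n, G n = t n ∨ G n = (t n)ᶜ
  mono : Monotone G
  inj : Function.Injective t
  mem : ∀ n, t n ∈ V

namespace Ladder

variable {W V : Set (Set X)}

theorem tW (hA : Amb W V) (L : Ladder V) (n : ℕ) : L.t n ∈ W := hA.VW (L.mem n)

theorem twall (hA : Amb W V) (L : Ladder V) (n : ℕ) : IsWall (L.t n) :=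
  hA.wall _ (L.tW hA n)

theorem Gwall (hA : Amb W V) (L : Ladder V) (n : ℕ) : IsWall (L.G n) := by
  rcases L.side n with e | e <;> rw [e]
  · exact L.twall hA n
  · exact (L.twall hA n).compl

theorem GNe (hA : Amb W V) (L : Ladder V) (n : ℕ) : (L.G n).Nonempty :=
  (L.Gwall hA n).1

theorem GcNe (hA : Amb W V) (L : Ladder V) (n : ℕ) : (L.G n)ᶜ.Nonempty :=
  (L.Gwall hA n).2

theorem sideC (L : Ladder V) (n : ℕ) :
    (L.G n)ᶜ = L.t n ∨ (L.G n)ᶜ = (L.t n)ᶜ := by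
  rcases L.side n with e | e <;> rw [e]
  · exact Or.inr rfl
  · exact Or.inl (compl_compl _)

theorem G_idx (hA : Amb W V) (L : Ladder V) {m n : ℕ} (h : L.G m = L.G n) : m = n := by
  apply L.inj
  exact wall_eq_of_hs hA.adm (L.tW hA m) (L.tW hA n)
    (L.side m) (h ▸ L.side n)

/-- the tail ladder -/
def tail (L : Ladder V) (N : ℕ) : Ladder V where
  t := fun n => L.t (N + n)
  G := fun n => L.G (N + n)
  side := fun n => L.side _
  mono := fun _ _ h => L.mono (Nat.add_le_add_left h N)
  inj := fun a b h => Nat.add_left_cancel (L.inj h)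
  mem := fun n => L.mem _

end Ladder

/-- lower set: some ladder halfspace is contained in δ -/
def LLow {V : Set (Set X)} (L : Ladder V) (δ : Set X) : Prop := ∃ m, L.G m ⊆ δ

/-- upper: δ is contained in some ladder halfspace -/
def LUpp {V : Set (Set X)} (L : Ladder V) (δ : Set X) : Prop := ∃ m, δ ⊆ L.G m

/-- explicit description of the inseparable closure of the ladder -/
def LBB (W : Set (Set X)) {V : Set (Set X)} (L : Ladder V) : Set (Set X) :=
  Set.range L.t ∪ {w | w ∈ W ∧ ∃ δ, (δ = w ∨ δ = wᶜ) ∧ LLow L δ ∧ (LLow L δᶜ ∨ LUpp L δ)}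

def LK1 (W : Set (Set X)) {V : Set (Set X)} (L : Ladder V) : Set (Set X) :=
  {u | u ∈ W ∧ ∃ δ, (δ = u ∨ δ = uᶜ) ∧ LLow L δ ∧ LLow L δᶜ}

def CrossSet (W : Set (Set X)) {V : Set (Set X)} (L : Ladder V) (n : ℕ) : Set (Set X) :=
  {u ∈ insepClosure W (Set.range L.t) | Crosses u (L.t n)}

end Aux
section Aux2

variable {X : Type*} {W V : Set (Set X)}

theorem subset_insepClosure {C : Set (Set X)} : C ⊆ insepClosure W C :=
  fun _ hx => Set.mem_sInter.2 fun _ hS => hS.1 hx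

theorem insepClosure_subset_W {C : Set (Set X)} (hCW : C ⊆ W) : insepClosure W C ⊆ W :=
  Set.sInter_subset_of_mem ⟨hCW, subset_rfl, fun _ _ _ _ _ hw _ => hw⟩

theorem insepClosure_insep (C : Set (Set X)) : InseparableIn W (insepClosure W C) :=
  fun u hu v hv w hw hsep => Set.mem_sInter.2 fun S hS =>
    hS.2.2 u (Set.mem_sInter.1 hu S hS) v (Set.mem_sInter.1 hv S hS) w hw hsep

theorem insepClosure_mono {A B : Set (Set X)} (h : A ⊆ insepClosure W B) (hBW : B ⊆ W) :
    insepClosure W A ⊆ insepClosure W B :=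
  Set.sInter_subset_of_mem ⟨h, insepClosure_subset_W hBW, insepClosure_insep B⟩

theorem insepClosure_subset_V (hA : Amb W V) {C : Set (Set X)} (hCV : C ⊆ V) :
    insepClosure W C ⊆ V :=
  Set.sInter_subset_of_mem ⟨hCV, hA.VW, hA.Vinsep⟩

theorem ubs_of_subset (hA : Amb W V) {U : Set (Set X)} (hUV : U ⊆ V)
    (hinf : U.Infinite) (hins : InseparableIn W U) : IsUBS W U := by
  refine ⟨hUV.trans hA.VW, hinf, hins, ?_, ?_⟩
  · intro w hw
    rcases hA.Vuni w (hUV hw) with h | h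
    · exact Or.inl (h.subset fun x hx => ⟨hUV hx.1, hx.2⟩)
    · exact Or.inr (h.subset fun x hx => ⟨hUV hx.1, hx.2⟩)
  · rintro ⟨a, ha, b, hb, c, hc, rest⟩
    exact hA.Vnft ⟨a, hUV ha, b, hUV hb, c, hUV hc, rest⟩

namespace Ladder

variable {L : Ladder V}

theorem rangeV (L : Ladder V) : Set.range L.t ⊆ V := by rintro x ⟨n, rfl⟩; exact L.mem n

theorem kk_subset_V (hA : Amb W V) (L : Ladder V) : insepClosure W (Set.range L.t) ⊆ V :=
  insepClosure_subset_V hA L.rangeV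

theorem kk_ubs (hA : Amb W V) (L : Ladder V) : IsUBS W (insepClosure W (Set.range L.t)) :=
  ubs_of_subset hA (L.kk_subset_V hA)
    ((Set.infinite_range_of_injective L.inj).mono subset_insepClosure)
    (insepClosure_insep _)

theorem pLow (L : Ladder V) {u γ : Set X} (hu : u ∈ LBB W L) (hγ : γ = u ∨ γ = uᶜ) :
    LLow L γ ∨ LUpp L γᶜ := by
  rcases hu with ⟨j, rfl⟩ | ⟨hw, δ, hflag, hlow, hrest⟩
  · rcases hsCases (L.side j) hγ with rfl | e
    · exact Or.inl ⟨j, subset_rfl⟩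
    · exact Or.inr ⟨j, by rw [e, compl_compl]⟩
  · rcases hsCases hflag hγ with rfl | e
    · exact Or.inl hlow
    · rcases hrest with hl | hu
      · exact Or.inl (by rwa [e])
      · exact Or.inr (by rwa [e, compl_compl])

theorem lbb_subset_W (hA : Amb W V) (L : Ladder V) : LBB W L ⊆ W := by
  rintro x (⟨n, rfl⟩ | ⟨hw, -⟩)
  · exact L.tW hA n
  · exact hw

theorem lbb_insep (hA : Amb W V) (L : Ladder V) : InseparableIn W (LBB W L) := by
  intro u hu v hv w hw hsep
  obtain ⟨huv, huw, hvw, u', v', w', hu', hv', hw', h1, h2⟩ := hsep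
  have A1 : LLow L w' ∨ LUpp L w'ᶜ := by
    rcases L.pLow hu hu' with ⟨m, hm⟩ | ⟨m, hm⟩
    · exact Or.inl ⟨m, hm.trans h1⟩
    · exact Or.inr ⟨m, (compl_subset_compl.2 h1).trans hm⟩
  have A2 : LLow L w'ᶜ ∨ LUpp L w' := by
    rcases L.pLow hv hv' with ⟨m, hm⟩ | ⟨m, hm⟩
    · exact Or.inl ⟨m, hm.trans h2⟩
    · exact Or.inr ⟨m, (Set.subset_compl_comm.1 h2).trans hm⟩
  rcases A1 with hlo | ⟨k, hk⟩
  · rcases A2 with hlo' | hup'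
    · exact Or.inr ⟨hw, w', hw', hlo, Or.inl hlo'⟩
    · exact Or.inr ⟨hw, w', hw', hlo, Or.inr hup'⟩
  · rcases A2 with hlo' | ⟨m, hm⟩
    · refine Or.inr ⟨hw, w'ᶜ, ?_, hlo', Or.inr ⟨k, hk⟩⟩
      rcases hw' with rfl | e
      · exact Or.inr rfl
      · exact Or.inl (by rw [e, compl_compl])
    · exfalso
      obtain ⟨x, hx⟩ := L.GcNe hA (max m k)
      refine hx ?_
      by_cases hxw : x ∈ w'
      · exact L.mono (le_max_left m k) (hm hxw)
      · exact L.mono (le_max_right m k) (hk hxw)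

theorem lbb_eq (hA : Amb W V) (L : Ladder V) : insepClosure W (Set.range L.t) = LBB W L := by
  apply subset_antisymm
  · exact Set.sInter_subset_of_mem
      ⟨Set.subset_union_left, L.lbb_subset_W hA, L.lbb_insep hA⟩
  · rintro w (⟨j, rfl⟩ | ⟨hw, δ, hflag, ⟨a, ha⟩, hrest⟩)
    · exact subset_insepClosure ⟨j, rfl⟩
    · by_cases hr : w ∈ Set.range L.t
      · exact subset_insepClosure hr
      intro S hS
      have htS : ∀ n, L.t n ∈ S := fun n => hS.1 ⟨n, rfl⟩
      rcases hrest with ⟨b, hb⟩ | ⟨b, hb⟩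
      · -- G b ⊆ δᶜ
        have hab : a ≠ b := by
          rintro rfl
          obtain ⟨x, hx⟩ := L.GNe hA a
          exact (hb hx) (ha hx)
        refine hS.2.2 (L.t a) (htS a) (L.t b) (htS b) w hw
          ⟨fun e => hab (L.inj e), fun e => hr ⟨a, e⟩, fun e => hr ⟨b, e⟩,
            L.G a, L.G b, δ, L.side a, L.side b, hflag, ha, hb⟩
      · -- δ ⊆ G b
        have hab : a ≠ b := by
          rintro rfl
          have : δ = L.G a := subset_antisymm hb ha
          exact hr ⟨a, (wall_eq_of_hs hA.adm hw (L.tW hA a) hflag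
            (this ▸ L.side a)).symm⟩
        refine hS.2.2 (L.t a) (htS a) (L.t b) (htS b) w hw
          ⟨fun e => hab (L.inj e), fun e => hr ⟨a, e⟩, fun e => hr ⟨b, e⟩,
            L.G a, (L.G b)ᶜ, δ, L.side a, L.sideC b, hflag, ha,
            compl_subset_compl.2 hb⟩

theorem not_crosses_tt (L : Ladder V) (m n : ℕ) : ¬ Crosses (L.t m) (L.t n) := by
  intro hc
  rcases le_total m n with h | h
  · obtain ⟨x, hx1, hx2⟩ := crosses_iff.1 hc (L.G m) (L.G n)ᶜ (L.side m) (L.sideC n)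
    exact hx2 (L.mono h hx1)
  · obtain ⟨x, hx1, hx2⟩ := crosses_iff.1 hc (L.G m)ᶜ (L.G n) (L.sideC m) (L.side n)
    exact hx1 (L.mono h hx2)

theorem cross_not_range (L : Ladder V) {u : Set X} {n : ℕ} (hc : Crosses u (L.t n)) :
    u ∉ Set.range L.t := by
  rintro ⟨m, rfl⟩
  exact L.not_crosses_tt m n hc

theorem liesG_finite (hA : Amb W V) (L : Ladder V) (m : ℕ) : {u ∈ V | LiesIn u (L.G m) (L.t m)}.Finite := by
  have hinf : {u ∈ V | LiesIn u (L.G m)ᶜ (L.t m)}.Infinite := by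
    apply Set.Infinite.mono (s := L.t '' Set.Ioi m)
    · rintro x ⟨k, hk, rfl⟩
      refine ⟨L.mem k, fun e => (Nat.lt_irrefl m) (by rw [L.inj e] at hk; exact hk), ?_⟩
      have hsub : (L.G k)ᶜ ⊆ (L.G m)ᶜ := compl_subset_compl.2 (L.mono (le_of_lt hk))
      rcases L.sideC k with e | e
      · exact Or.inl (e ▸ hsub)
      · exact Or.inr (e ▸ hsub)
    · exact (Set.Ioi_infinite m).image (L.inj.injOn)
  rcases L.side m with e | e
  · rcases hA.Vuni (L.t m) (L.mem m) with h | h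
    · rwa [e]
    · exfalso; rw [e] at hinf; exact hinf h
  · rcases hA.Vuni (L.t m) (L.mem m) with h | h
    · exfalso; rw [e, compl_compl] at hinf; exact hinf h
    · rwa [e]

theorem lk1_finite (hA : Amb W V) (L : Ladder V) : (LK1 W L).Finite := by
  apply hA.nic _ (fun u hu => hu.1)
  rintro u ⟨-, δ, hfu, ⟨a, ha⟩, ⟨b, hb⟩⟩ v ⟨-, ε, hfv, ⟨p, hp⟩, ⟨q, hq⟩⟩ huv
  have corner : ∀ (s t : Set X) (i j : ℕ), L.G i ⊆ s → L.G j ⊆ t → (s ∩ t).Nonempty := by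
    intro s t i j hs ht
    obtain ⟨x, hx⟩ := L.GNe hA (min i j)
    exact ⟨x, hs (L.mono (min_le_left i j) hx), ht (L.mono (min_le_right i j) hx)⟩
  exact crosses_of_hs hfu hfv (corner _ _ a p ha hp) (corner _ _ a q ha hq)
    (corner _ _ b p hb hp) (corner _ _ b q hb hq)

end Ladder

end Aux2
section Aux3

variable {X : Type*} {W V : Set (Set X)}

theorem exists_ladder_of_chain (hA : Amb W V) {c : ℕ → Set X} (hc : IsChainSeq c)
    (hcV : ∀ n, c n ∈ V) : ∃ L : Ladder V, L.t = c := by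
  classical
  have hwall : ∀ n, IsWall (c n) := fun n => hA.wall _ (hA.VW (hcV n))
  have hcW : ∀ n, c n ∈ W := fun n => hA.VW (hcV n)
  choose Afn Bfn Wfn hAf hBf hWf h1 h2 using fun n => (hc.2 n).2.2.2
  let aux : ℕ → Set X × Set X := fun n =>
    Nat.rec (Afn 0, Wfn 0)
      (fun n p => (p.2, if Afn (n + 1) = p.2 then Wfn (n + 1) else (Wfn (n + 1))ᶜ)) n
  have aux_fst : ∀ n, (aux (n + 1)).1 = (aux n).2 := fun n => rfl
  have aux_snd : ∀ n, (aux (n + 1)).2 =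
      if Afn (n + 1) = (aux n).2 then Wfn (n + 1) else (Wfn (n + 1))ᶜ := fun n => rfl
  have hBne : ∀ n, (Bfn n).Nonempty := by
    intro n
    rcases hBf n with e | e <;> rw [e]
    · exact (hwall (n + 2)).1
    · exact (hwall (n + 2)).2
  have key : ∀ n, ((aux n).1 = c n ∨ (aux n).1 = (c n)ᶜ) ∧
      ((aux n).2 = c (n + 1) ∨ (aux n).2 = (c (n + 1))ᶜ) ∧
      (aux n).1 ⊆ (aux n).2 ∧ (aux n).2 ⊆ (Bfn n)ᶜ := by
    intro n
    induction n with
    | zero => exact ⟨hAf 0, hWf 0, h1 0, Set.subset_compl_comm.1 (h2 0)⟩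
    | succ n ih =>
      obtain ⟨ih1, ih2, ih3, ih4⟩ := ih
      have hAeq : Afn (n + 1) = (aux n).2 := by
        rcases hsCases ih2 (hAf (n + 1)) with h | h
        · exact h
        · exfalso
          have hsub : ((aux n).2)ᶜ ⊆ Wfn (n + 1) := h ▸ h1 (n + 1)
          rcases hsCases (hBf n) (hWf (n + 1)) with e | e
          · -- Wfn (n+1) = Bfn n
            have heq : Bfn n = ((aux n).2)ᶜ :=
              subset_antisymm (Set.subset_compl_comm.1 ih4) (e ▸ hsub)
            have hflag : Bfn n = c (n + 1) ∨ Bfn n = (c (n + 1))ᶜ := by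
              rcases ih2 with e2 | e2
              · exact Or.inr (by rw [heq, e2])
              · exact Or.inl (by rw [heq, e2, compl_compl])
            have : c (n + 2) = c (n + 1) :=
              wall_eq_of_hs hA.adm (hcW (n + 2)) (hcW (n + 1)) (hBf n) hflag
            have := hc.1 this
            omega
          · -- Wfn (n+1) = (Bfn n)ᶜ
            obtain ⟨x, hx⟩ := hBne n
            have hxc : x ∈ (Bfn n)ᶜ := by
              by_cases hxa : x ∈ (aux n).2
              · exact ih4 hxa
              · exact e ▸ hsub hxa
            exact hxc hx
      refine ⟨?_, ?_, ?_, ?_⟩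
      · rw [aux_fst n]; exact ih2
      · rw [aux_snd n, if_pos hAeq]; exact hWf (n + 1)
      · rw [aux_fst n, aux_snd n, if_pos hAeq, ← hAeq]; exact h1 (n + 1)
      · rw [aux_snd n, if_pos hAeq]; exact Set.subset_compl_comm.1 (h2 (n + 1))
  refine ⟨⟨c, fun n => (aux n).1, fun n => (key n).1, ?_, hc.1, hcV⟩, rfl⟩
  apply monotone_nat_of_le_succ
  intro n
  have e : (aux (n + 1)).1 = (aux n).2 := aux_fst n
  show (aux n).1 ⊆ (aux (n + 1)).1
  rw [e]
  exact (key n).2.2.1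

end Aux3
section Aux4

variable {X : Type*} {W V : Set (Set X)}

theorem hsCompl {u γ : Set X} (h : γ = u ∨ γ = uᶜ) : γᶜ = u ∨ γᶜ = uᶜ := by
  rcases h with rfl | rfl
  · exact Or.inr rfl
  · exact Or.inl (compl_compl u)

theorem no_inf_cross_seq (nic : NoInfCross W) (uu : ℕ → Set X)
    (hW : ∀ k, uu k ∈ W) (hcr : ∀ k l, k < l → Crosses (uu k) (uu l)) : False := by
  have hinj : Function.Injective uu := by
    intro a b hab
    by_contra hne
    rcases lt_or_gt_of_ne hne with h | h
    · exact (hcr a b h).ne hab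
    · exact (hcr b a h).ne hab.symm
  have hpair : (Set.range uu).Pairwise Crosses := by
    rintro x ⟨a, rfl⟩ y ⟨b, rfl⟩ hne
    rcases lt_or_gt_of_ne (fun e : a = b => hne (congrArg uu e)) with h | h
    · exact hcr a b h
    · exact (hcr b a h).symm
  exact (Set.infinite_range_of_injective hinj)
    (nic _ (by rintro x ⟨a, rfl⟩; exact hW a) hpair)

theorem exists_lower_ladder (hA : Amb W V) (L : Ladder V) (n : ℕ)
    (hinf : (CrossSet W L n).Infinite) :
    ∃ L' : Ladder V, Set.range L'.t ⊆ insepClosure W (Set.range L.t) ∧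
      ∀ u ∈ insepClosure W (Set.range L'.t), Crosses u (L.t n) := by
  classical
  have hBB := L.lbb_eq hA
  set A' : Set (Set X) := CrossSet W L n \ LK1 W L with hA'def
  have hA'inf : A'.Infinite := hinf.diff (L.lk1_finite hA)
  have hwit : ∀ u, ∃ δ, u ∈ A' → (δ = u ∨ δ = uᶜ) ∧ (∃ a, L.G a ⊆ δ) ∧
      (∃ b, δ ⊆ L.G b) ∧ Crosses u (L.t n) ∧ u ∈ insepClosure W (Set.range L.t) := by
    intro u
    by_cases hu : u ∈ A'
    · obtain ⟨⟨huK, hcr⟩, hnk1⟩ := hu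
      have huB : u ∈ LBB W L := hBB ▸ huK
      rcases huB with hr | ⟨huW, δ, hflag, hlow, hrest⟩
      · exact absurd hr (L.cross_not_range hcr)
      · refine ⟨δ, fun _ => ⟨hflag, hlow, ?_, hcr, huK⟩⟩
        rcases hrest with hl | hu2
        · exact absurd ⟨huW, δ, hflag, hlow, hl⟩ hnk1
        · exact hu2
    · exact ⟨∅, fun h => absurd h hu⟩
  choose δf hδf using hwit
  have dich : ∀ u ∈ A', ∀ v ∈ A', δf u ⊆ δf v ∨ δf v ⊆ δf u ∨ Crosses u v := by
    intro u hu v hv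
    obtain ⟨fu, ⟨a, ha⟩, ⟨b, hb⟩, -, -⟩ := hδf u hu
    obtain ⟨fv, ⟨p, hp⟩, ⟨q, hq⟩, -, -⟩ := hδf v hv
    by_cases e1 : (δf u ∩ (δf v)ᶜ).Nonempty
    · by_cases e2 : ((δf u)ᶜ ∩ δf v).Nonempty
      · refine Or.inr (Or.inr (crosses_of_hs fu fv ?_ e1 e2 ?_))
        · obtain ⟨x, hx⟩ := L.GNe hA (min a p)
          exact ⟨x, ha (L.mono (min_le_left _ _) hx), hp (L.mono (min_le_right _ _) hx)⟩
        · obtain ⟨x, hx⟩ := L.GcNe hA (max b q)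
          exact ⟨x, fun hxx => hx (L.mono (le_max_left _ _) (hb hxx)),
            fun hxx => hx (L.mono (le_max_right _ _) (hq hxx))⟩
      · refine Or.inr (Or.inl ?_)
        by_contra hn
        exact e2 (by rw [Set.inter_comm]; exact Set.inter_compl_nonempty_iff.2 hn)
    · by_contra hn
      push_neg at hn
      exact e1 (Set.inter_compl_nonempty_iff.2 hn.1)
  have down_fin : ∀ u ∈ A', {v ∈ A' | δf v ⊆ δf u}.Finite := by
    intro u hu
    obtain ⟨fu, ⟨a, ha⟩, ⟨b, hb⟩, hcr, huK⟩ := hδf u hu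
    have huV : u ∈ V := L.kk_subset_V hA huK
    have hnr : u ∉ Set.range L.t := L.cross_not_range hcr
    have hinf2 : {x ∈ V | LiesIn x (δf u)ᶜ u}.Infinite := by
      apply Set.Infinite.mono (s := L.t '' Set.Ici b)
      · rintro x ⟨k, hk, rfl⟩
        refine ⟨L.mem k, fun e => hnr (e ▸ ⟨k, rfl⟩), ?_⟩
        have hsub : (L.G k)ᶜ ⊆ (δf u)ᶜ := compl_subset_compl.2 (hb.trans (L.mono hk))
        rcases L.sideC k with e | e
        · exact Or.inl (e ▸ hsub)
        · exact Or.inr (e ▸ hsub)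
      · exact (Set.Ici_infinite b).image L.inj.injOn
    have hfin2 : {x ∈ V | LiesIn x (δf u) u}.Finite := by
      rcases fu with e | e
      · rcases hA.Vuni u huV with h | h
        · rwa [e]
        · exfalso; rw [e] at hinf2; exact hinf2 h
      · rcases hA.Vuni u huV with h | h
        · exfalso; rw [e, compl_compl] at hinf2; exact hinf2 h
        · rwa [e]
    apply (hfin2.union (Set.finite_singleton u)).subset
    rintro v ⟨hvA, hvs⟩
    by_cases hvu : v = u
    · exact Or.inr hvu
    · refine Or.inl ⟨L.kk_subset_V hA (hδf v hvA).2.2.2.2, hvu, ?_⟩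
      rcases (hδf v hvA).1 with e | e
      · exact Or.inl (e ▸ hvs)
      · exact Or.inr (e ▸ hvs)
  have up_step : ∀ A'' ⊆ A', A''.Infinite →
      ∃ u ∈ A'', {v ∈ A'' | δf u ⊆ δf v ∧ v ≠ u}.Infinite := by
    intro A'' hsub hAinf
    by_contra hcon
    push_neg at hcon
    have hcon' : ∀ u ∈ A'', {v ∈ A'' | δf u ⊆ δf v ∧ v ≠ u}.Finite :=
      fun u hu => hcon u hu
    have step : ∀ B : {B : Set (Set X) // B ⊆ A'' ∧ B.Infinite},
        ∃ C : {B : Set (Set X) // B ⊆ A'' ∧ B.Infinite},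
          ∃ u ∈ B.1, C.1 ⊆ B.1 ∧ ∀ v ∈ C.1, Crosses u v := by
      intro B
      obtain ⟨u, hu⟩ := B.2.2.nonempty
      have hBinf : (B.1 \ ({v ∈ A' | δf v ⊆ δf u} ∪ {v ∈ A'' | δf u ⊆ δf v ∧ v ≠ u}
          ∪ {u})).Infinite :=
        B.2.2.diff (((down_fin u (hsub (B.2.1 hu))).union (hcon' u (B.2.1 hu))).union
          (Set.finite_singleton u))
      refine ⟨⟨_, fun v hv => B.2.1 hv.1, hBinf⟩, u, hu, fun v hv => hv.1, ?_⟩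
      rintro v ⟨hvB, hvn⟩
      simp only [Set.mem_union, Set.mem_setOf_eq, Set.mem_singleton_iff, not_or] at hvn
      obtain ⟨⟨hn1, hn2⟩, hn3⟩ := hvn
      rcases dich u (hsub (B.2.1 hu)) v (hsub (B.2.1 hvB)) with h | h | h
      · exact absurd ⟨B.2.1 hvB, h, hn3⟩ hn2
      · exact absurd ⟨hsub (B.2.1 hvB), h⟩ hn1
      · exact h
    obtain ⟨g, hg0, hgR⟩ := dc_nat _ (⟨A'', subset_rfl, hAinf⟩ :
      {B : Set (Set X) // B ⊆ A'' ∧ B.Infinite}) step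
    choose uu huu hsub2 hcr using hgR
    have hdesc : ∀ k l, k ≤ l → (g l).1 ⊆ (g k).1 := by
      intro k l hkl
      induction l with
      | zero => rw [Nat.le_zero.1 hkl]
      | succ l ih =>
        rcases Nat.lt_or_ge k (l + 1) with h | h
        · exact (hsub2 l).trans (ih (Nat.lt_succ_iff.1 h))
        · rw [le_antisymm hkl h]
    have hKW : insepClosure W (Set.range L.t) ⊆ W :=
      insepClosure_subset_W (by rintro x ⟨m, rfl⟩; exact L.tW hA m)
    refine no_inf_cross_seq hA.nic uu (fun k => ?_) (fun k l hkl => ?_)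
    · exact hKW (((g k).2.1.trans hsub) (huu k)).1.1
    · exact hcr k (uu l) (hdesc (k + 1) l hkl (huu l))
  have stepmain : ∀ B : {B : Set (Set X) // B ⊆ A' ∧ B.Infinite},
      ∃ C : {B : Set (Set X) // B ⊆ A' ∧ B.Infinite},
        ∃ u ∈ B.1, C.1 = {v ∈ B.1 | δf u ⊆ δf v ∧ v ≠ u} := by
    intro B
    obtain ⟨u, hu, hupinf⟩ := up_step B.1 B.2.1 B.2.2
    have hinf3 : {v ∈ B.1 | δf u ⊆ δf v ∧ v ≠ u}.Infinite := hupinf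
    exact ⟨⟨_, fun v hv => B.2.1 hv.1, hinf3⟩, u, hu, rfl⟩
  obtain ⟨g, hg0, hgR⟩ := dc_nat _ (⟨A', subset_rfl, hA'inf⟩ :
    {B : Set (Set X) // B ⊆ A' ∧ B.Infinite}) stepmain
  choose us hus hgeq using hgR
  have hdesc : ∀ k l, k ≤ l → (g l).1 ⊆ (g k).1 := by
    intro k l hkl
    induction l with
    | zero => rw [Nat.le_zero.1 hkl]
    | succ l ih =>
      rcases Nat.lt_or_ge k (l + 1) with h | h
      · refine (subset_trans ?_ (ih (Nat.lt_succ_iff.1 h)))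
        rw [hgeq l]; exact fun v hv => hv.1
      · rw [le_antisymm hkl h]
  have hmemA' : ∀ k, us k ∈ A' := fun k => (g k).2.1 (hus k)
  have hstep2 : ∀ k l, k < l → δf (us k) ⊆ δf (us l) ∧ us l ≠ us k := by
    intro k l hkl
    have hmem : us l ∈ (g (k + 1)).1 := hdesc (k + 1) l hkl (hus l)
    rw [hgeq k] at hmem
    exact ⟨hmem.2.1, hmem.2.2⟩
  have hmono : Monotone (fun k => δf (us k)) := by
    apply monotone_nat_of_le_succ
    intro k
    exact (hstep2 k (k + 1) (Nat.lt_succ_self k)).1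
  have hinj : Function.Injective us := by
    intro a b hab
    by_contra hne
    rcases lt_or_gt_of_ne hne with h | h
    · exact (hstep2 a b h).2 hab.symm
    · exact (hstep2 b a h).2 hab
  let L' : Ladder V := ⟨us, fun k => δf (us k), fun k => (hδf _ (hmemA' k)).1, hmono,
    hinj, fun k => L.kk_subset_V hA (hδf _ (hmemA' k)).2.2.2.2⟩
  have hrange : Set.range L'.t ⊆ insepClosure W (Set.range L.t) := by
    rintro x ⟨k, rfl⟩
    exact (hδf _ (hmemA' k)).2.2.2.2
  refine ⟨L', hrange, ?_⟩
  intro x hx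
  rw [L'.lbb_eq hA] at hx
  have corners : ∀ j, ((δf (us j)) ∩ L.G n).Nonempty ∧ ((δf (us j)) ∩ (L.G n)ᶜ).Nonempty ∧
      ((δf (us j))ᶜ ∩ L.G n).Nonempty ∧ ((δf (us j))ᶜ ∩ (L.G n)ᶜ).Nonempty := by
    intro j
    have hcr := (hδf _ (hmemA' j)).2.2.2.1
    have hfj := (hδf _ (hmemA' j)).1
    exact ⟨crosses_iff.1 hcr _ _ hfj (L.side n), crosses_iff.1 hcr _ _ hfj (L.sideC n),
      crosses_iff.1 hcr _ _ (hsCompl hfj) (L.side n),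
      crosses_iff.1 hcr _ _ (hsCompl hfj) (L.sideC n)⟩
  rcases hx with ⟨k, rfl⟩ | ⟨hxW, δ, hflag, ⟨i, hi⟩, hrest⟩
  · exact (hδf _ (hmemA' k)).2.2.2.1
  · have hi' : δf (us i) ⊆ δ := hi
    rcases hrest with ⟨j, hj⟩ | ⟨j, hj⟩
    · have hj' : δf (us j) ⊆ δᶜ := hj
      obtain ⟨c1, c2, -, -⟩ := corners i
      obtain ⟨c3, c4, -, -⟩ := corners j
      exact crosses_of_hs hflag (L.side n)
        (c1.mono (Set.inter_subset_inter hi' subset_rfl))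
        (c2.mono (Set.inter_subset_inter hi' subset_rfl))
        (c3.mono (Set.inter_subset_inter hj' subset_rfl))
        (c4.mono (Set.inter_subset_inter hj' subset_rfl))
    · have hj' : (δf (us j))ᶜ ⊆ δᶜ := compl_subset_compl.2 hj
      obtain ⟨c1, c2, -, -⟩ := corners i
      obtain ⟨-, -, c3, c4⟩ := corners j
      exact crosses_of_hs hflag (L.side n)
        (c1.mono (Set.inter_subset_inter hi' subset_rfl))
        (c2.mono (Set.inter_subset_inter hi' subset_rfl))
        (c3.mono (Set.inter_subset_inter hj' subset_rfl))
        (c4.mono (Set.inter_subset_inter hj' subset_rfl))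

end Aux4
section Aux5

variable {X : Type*} {W V : Set (Set X)}

theorem tame_minimal (hA : Amb W V) (L : Ladder V) (N : ℕ)
    (hfin : ∀ n, N ≤ n → (CrossSet W L n).Finite) :
    MinUBS W (insepClosure W (Set.range (L.tail N).t)) := by
  classical
  set L' := L.tail N with hL'def
  have hBB' := L'.lbb_eq hA
  have hUubs : IsUBS W (insepClosure W (Set.range L'.t)) := L'.kk_ubs hA
  have hsubKK : insepClosure W (Set.range L'.t) ⊆ insepClosure W (Set.range L.t) := by
    apply insepClosure_mono
    · rintro x ⟨k, rfl⟩
      exact subset_insepClosure ⟨N + k, rfl⟩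
    · rintro x ⟨m, rfl⟩
      exact L.tW hA m
  refine ⟨hUubs, ?_⟩
  intro U'' h2ubs hsub
  obtain ⟨hUW'', hUinf'', hUins'', -, -⟩ := h2ubs
  refine ⟨(Set.diff_eq_empty.2 hsub) ▸ Set.finite_empty, ?_⟩
  set D'' : Set ℕ := {k | L'.t k ∈ U''} with hD''def
  by_cases hD : D''.Infinite
  · -- D'' infinite : the difference is finite
    obtain ⟨M, hMmem⟩ := hD.nonempty
    have hDunb : ∀ k, ∃ m, m ∈ D'' ∧ k < m := by
      intro k
      by_contra hcon
      push_neg at hcon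
      exact hD ((Set.finite_Iic k).subset hcon)
    have htail : ∀ k, M < k → L'.t k ∈ U'' := by
      intro k hMk
      obtain ⟨m, hmD, hkm⟩ := hDunb k
      refine hUins'' (L'.t M) hMmem (L'.t m) hmD (L'.t k) (L'.tW hA k)
        ⟨fun e => ?_, fun e => ?_, fun e => ?_,
          L'.G M, (L'.G m)ᶜ, L'.G k, L'.side M, L'.sideC m, L'.side k,
          L'.mono (le_of_lt hMk), compl_subset_compl.2 (L'.mono (le_of_lt hkm))⟩
      · have := L'.inj e; omega
      · have := L'.inj e; omega
      · have := L'.inj e; omega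
    have hFfin : ((L'.t '' Set.Iic M) ∪ (LK1 W L' ∪
        ({x ∈ V | LiesIn x (L'.G M) (L'.t M)} ∪ CrossSet W L (N + M)))).Finite :=
      ((Set.finite_Iic M).image _).union ((L'.lk1_finite hA).union
        ((L'.liesG_finite hA M).union (hfin (N + M) (Nat.le_add_right N M))))
    apply hFfin.subset
    rintro u ⟨huU, huU''⟩
    by_cases hr : u ∈ Set.range L'.t
    · obtain ⟨k, rfl⟩ := hr
      rcases le_or_gt k M with h | h
      · exact Or.inl ⟨k, h, rfl⟩
      · exact absurd (htail k h) huU''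
    · have huB : u ∈ LBB W L' := hBB' ▸ huU
      rcases huB with hrg | ⟨huW, δ, hflag, ⟨a, ha⟩, hrest⟩
      · exact absurd hrg hr
      rcases hrest with hl | ⟨b, hb⟩
      · exact Or.inr (Or.inl ⟨huW, δ, hflag, ⟨a, ha⟩, hl⟩)
      by_cases h1 : δ ⊆ L'.G M
      · refine Or.inr (Or.inr (Or.inl ⟨L'.kk_subset_V hA huU, fun e => hr ⟨M, e.symm⟩, ?_⟩))
        rcases hflag with e | e
        · exact Or.inl (e ▸ h1)
        · exact Or.inr (by rw [← e]; exact h1)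
      by_cases h2 : L'.G M ⊆ δ
      · -- u is separated by the tail walls: u ∈ U'', contradiction
        exfalso
        have hMb : M ≤ b := by
          by_contra hlt
          push_neg at hlt
          have heq : M = b := L'.G_idx hA (subset_antisymm (h2.trans hb) (L'.mono (le_of_lt hlt)))
          omega
        rcases eq_or_lt_of_le hMb with heq | hlt
        · have hδ : δ = L'.G M := subset_antisymm (heq ▸ hb) h2
          exact hr ⟨M, (wall_eq_of_hs hA.adm huW (L'.tW hA M) hflag (hδ ▸ L'.side M)).symm⟩
        · refine huU'' (hUins'' (L'.t M) hMmem (L'.t b) (htail b hlt) u huW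
            ⟨fun e => ?_, fun e => hr ⟨M, e⟩, fun e => hr ⟨b, e⟩,
              L'.G M, (L'.G b)ᶜ, δ, L'.side M, L'.sideC b, hflag, h2,
              compl_subset_compl.2 hb⟩)
          have := L'.inj e; omega
      · -- u crosses the M-th wall of the tail
        refine Or.inr (Or.inr (Or.inr ⟨hsubKK huU, ?_⟩))
        have c1 : (δ ∩ L'.G M).Nonempty := by
          obtain ⟨x, hx⟩ := L'.GNe hA (min a M)
          exact ⟨x, ha (L'.mono (min_le_left _ _) hx), L'.mono (min_le_right _ _) hx⟩
        have c2 : (δ ∩ (L'.G M)ᶜ).Nonempty := Set.inter_compl_nonempty_iff.2 h1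
        have c3 : (δᶜ ∩ L'.G M).Nonempty := by
          rw [Set.inter_comm]
          exact Set.inter_compl_nonempty_iff.2 h2
        have c4 : (δᶜ ∩ (L'.G M)ᶜ).Nonempty := by
          obtain ⟨x, hx⟩ := L'.GcNe hA (max b M)
          exact ⟨x, fun hxd => hx (L'.mono (le_max_left _ _) (hb hxd)),
            fun hxM => hx (L'.mono (le_max_right _ _) hxM)⟩
        exact crosses_of_hs hflag (L'.side M) c1 c2 c3 c4
  · -- D'' finite : impossible
    exfalso
    rw [Set.not_infinite] at hD
    set S0 : Set (Set X) := U'' \ (LK1 W L' ∪ L'.t '' D'') with hS0def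
    have hS0inf : S0.Infinite := hUinf''.diff ((L'.lk1_finite hA).union (hD.image _))
    have hnrS : ∀ u ∈ S0, u ∉ Set.range L'.t := by
      rintro u ⟨huU'', hun⟩ ⟨k, rfl⟩
      exact hun (Or.inr ⟨k, huU'', rfl⟩)
    have hwit2 : ∀ u, ∃ δ, u ∈ S0 → (δ = u ∨ δ = uᶜ) ∧ (∃ a, L'.G a ⊆ δ) ∧
        (∃ b, δ ⊆ L'.G b) := by
      intro u
      by_cases hu : u ∈ S0
      · have huB : u ∈ LBB W L' := hBB' ▸ (hsub hu.1)
        rcases huB with hrg | ⟨huW, δ, hflag, hlow, hrest⟩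
        · exact absurd hrg (hnrS u hu)
        rcases hrest with hl | hup
        · exact absurd (Or.inl ⟨huW, δ, hflag, hlow, hl⟩) hu.2
        · exact ⟨δ, fun _ => ⟨hflag, hlow, hup⟩⟩
      · exact ⟨∅, fun h => absurd h hu⟩
    choose δg hδg using hwit2
    by_cases hPb : ∃ m0, ∀ u ∈ S0, ∀ m, L'.G m ⊆ δg u → m ≤ m0
    · obtain ⟨m0, hm0⟩ := hPb
      apply hS0inf
      apply (((L'.liesG_finite hA (m0 + 1)).union
        (hfin (N + (m0 + 1)) (Nat.le_add_right _ _)))).subset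
      intro u hu
      obtain ⟨hflag, ⟨a, ha⟩, ⟨b, hb⟩⟩ := hδg u hu
      by_cases h1 : δg u ⊆ L'.G (m0 + 1)
      · refine Or.inl ⟨L'.kk_subset_V hA (hsub hu.1), fun e => hnrS u hu ⟨m0 + 1, e.symm⟩, ?_⟩
        rcases hflag with e | e
        · exact Or.inl (e ▸ h1)
        · exact Or.inr (by rw [← e]; exact h1)
      · have h2 : ¬ L'.G (m0 + 1) ⊆ δg u := fun hcon => by
          have := hm0 u hu (m0 + 1) hcon; omega
        refine Or.inr ⟨hsubKK (hsub hu.1), ?_⟩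
        have c1 : (δg u ∩ L'.G (m0 + 1)).Nonempty := by
          obtain ⟨x, hx⟩ := L'.GNe hA (min a (m0 + 1))
          exact ⟨x, ha (L'.mono (min_le_left _ _) hx), L'.mono (min_le_right _ _) hx⟩
        have c2 : (δg u ∩ (L'.G (m0 + 1))ᶜ).Nonempty := Set.inter_compl_nonempty_iff.2 h1
        have c3 : ((δg u)ᶜ ∩ L'.G (m0 + 1)).Nonempty := by
          rw [Set.inter_comm]
          exact Set.inter_compl_nonempty_iff.2 h2
        have c4 : ((δg u)ᶜ ∩ (L'.G (m0 + 1))ᶜ).Nonempty := by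
          obtain ⟨x, hx⟩ := L'.GcNe hA (max b (m0 + 1))
          exact ⟨x, fun hxd => hx (L'.mono (le_max_left _ _) (hb hxd)),
            fun hxM => hx (L'.mono (le_max_right _ _) hxM)⟩
        exact crosses_of_hs hflag (L'.side (m0 + 1)) c1 c2 c3 c4
    · push_neg at hPb
      obtain ⟨u0, hu0⟩ := hS0inf.nonempty
      obtain ⟨hflag0, ⟨a0, ha0⟩, ⟨b0, hb0⟩⟩ := hδg u0 hu0
      refine absurd (Set.infinite_of_forall_exists_gt fun k => ?_) (Set.not_infinite.2 hD)
      obtain ⟨u1, hu1, m1, hm1sub, hm1gt⟩ := hPb (max b0 k)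
      obtain ⟨hflag1, -, -⟩ := hδg u1 hu1
      have hb0m1 : b0 ≤ m1 := le_of_lt (lt_of_le_of_lt (le_max_left _ _) hm1gt)
      have hne : u1 ≠ u0 := by
        rintro rfl
        have heq : b0 = m1 := L'.G_idx hA
          (subset_antisymm (L'.mono hb0m1) (hm1sub.trans hb0))
        have hlt : b0 < m1 := lt_of_le_of_lt (le_max_left _ _) hm1gt
        omega
      have hm : L'.t m1 ∈ U'' := by
        refine hUins'' u0 hu0.1 u1 hu1.1 (L'.t m1) (L'.tW hA m1)
          ⟨Ne.symm hne, fun e => hnrS u0 hu0 ⟨m1, e.symm⟩, fun e => hnrS u1 hu1 ⟨m1, e.symm⟩,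
            δg u0, (δg u1)ᶜ, L'.G m1, hflag0, hsCompl hflag1, L'.side m1,
            hb0.trans (L'.mono hb0m1), compl_subset_compl.2 hm1sub⟩
      exact ⟨m1, hm, lt_of_le_of_lt (le_max_right _ _) hm1gt⟩

end Aux5
section Aux6

variable {X : Type*} {W V : Set (Set X)}

theorem Ladder.rangeW (hA : Amb W V) (L : Ladder V) : Set.range L.t ⊆ W := by
  rintro x ⟨n, rfl⟩
  exact L.tW hA n

theorem exists_min_ubs (hA : Amb W V) (L0 : Ladder V) :
    ∃ U, MinUBS W U ∧ U ⊆ insepClosure W (Set.range L0.t) := by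
  classical
  by_contra hcon
  push_neg at hcon
  have step : ∀ L : {L : Ladder V // insepClosure W (Set.range L.t) ⊆
        insepClosure W (Set.range L0.t)},
      ∃ L' : {L : Ladder V // insepClosure W (Set.range L.t) ⊆
        insepClosure W (Set.range L0.t)},
        ∃ n, insepClosure W (Set.range L'.1.t) ⊆ insepClosure W (Set.range L.1.t) ∧
        ∀ u ∈ insepClosure W (Set.range L'.1.t), Crosses u (L.1.t n) := by
    rintro ⟨L, hL⟩
    by_cases hcase : ∃ N, ∀ n, N ≤ n → (CrossSet W L n).Finite
    · obtain ⟨N, hN⟩ := hcase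
      exfalso
      apply hcon _ (tame_minimal hA L N hN)
      refine (insepClosure_mono ?_ (L.rangeW hA)).trans hL
      rintro x ⟨k, rfl⟩
      exact subset_insepClosure ⟨N + k, rfl⟩
    · push_neg at hcase
      obtain ⟨n, -, hninf⟩ := hcase 0
      obtain ⟨L', hrange, hcross⟩ := exists_lower_ladder hA L n hninf
      have hsub' : insepClosure W (Set.range L'.t) ⊆ insepClosure W (Set.range L.t) :=
        insepClosure_mono hrange (L.rangeW hA)
      exact ⟨⟨L', hsub'.trans hL⟩, n, hsub', hcross⟩
  obtain ⟨g, hg0, hgR⟩ := dc_nat _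
    (⟨L0, subset_rfl⟩ : {L : Ladder V // insepClosure W (Set.range L.t) ⊆
      insepClosure W (Set.range L0.t)}) step
  choose nn hsubseq hcr using hgR
  set w : ℕ → Set X := fun k => (g k).1.t (nn k) with hwdef
  have hwKK : ∀ k, w k ∈ insepClosure W (Set.range (g k).1.t) :=
    fun k => subset_insepClosure ⟨nn k, rfl⟩
  have hdesc : ∀ k l, k ≤ l → insepClosure W (Set.range (g l).1.t) ⊆
      insepClosure W (Set.range (g k).1.t) := by
    intro k l hkl
    induction l with
    | zero => rw [Nat.le_zero.1 hkl]
    | succ l ih =>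
      rcases Nat.lt_or_ge k (l + 1) with h | h
      · exact (hsubseq l).trans (ih (Nat.lt_succ_iff.1 h))
      · rw [le_antisymm hkl h]
  refine no_inf_cross_seq hA.nic w (fun k => ?_) (fun k l hkl => ?_)
  · exact insepClosure_subset_W ((g k).1.rangeW hA) (hwKK k)
  · exact (hcr k (w l) (hdesc (k + 1) l hkl (hwKK l))).symm

end Aux6
/-- The inseparable closure of a chain contained in a UBS contains a minimal UBS. -/
theorem insep_closure_of_chain_contains_minimal (W : Set (Set X))
    (hWc : W.Countable) (hWwall : ∀ h ∈ W, IsWall h)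
    (hWadm : Admissible W) (hWnic : NoInfCross W)
    (V : Set (Set X)) (hV : IsUBS W V)
    (c : ℕ → Set X) (hc : IsChainSeq c) (hcV : ∀ n, c n ∈ V) :
    ∃ U, MinUBS W U ∧ U ⊆ insepClosure W (Set.range c) := by
  obtain ⟨hVW, hVinf, hVins, hVuni, hVnft⟩ := hV
  have hA : Amb W V := ⟨hWwall, hWadm, hWnic, hVW, hVins, hVuni, hVnft⟩
  obtain ⟨L0, hL0⟩ := exists_ladder_of_chain hA hc hcV
  obtain ⟨U, hmin, hsub⟩ := exists_min_ubs hA L0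
  exact ⟨U, hmin, by rwa [hL0] at hsub⟩
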